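/- There exists a constant K > 0 with the following property. Call a tour a finite list of points p₀, p₁, …, p_m in ℝ² with p_m = p₀; its length is Σ_{i<m} ‖p_{i+1} − p_i‖, its trace is the union of the closed segments [p_i, p_{i+1}] (the singleton {p₀} if m = 0), and its coverage is the Minkowski sum of its trace with the square [−1/2, 1/2]². Then for every tour p of length at least 1 there exists a tour q whose first point is p₀, all of whose points lie in the shifted integer lattice p₀ + ℤ², whose coverage contains the coverage of p, and whose length is at most K times the length of p. -/

import Mathlib

open Pointwise

/-- The length of a tour `p 0, p 1, …, p m`. -/
noncomputable def tourLength (m : ℕ) (p : ℕ → EuclideanSpace ℝ (Fin 2)) : ℝ :=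
  ∑ i ∈ Finset.range m, ‖p (i + 1) - p i‖

/-- The trace of a tour: the union of the closed segments joining consecutive
points (the singleton `{p 0}` if `m = 0`). -/
def tourTrace (m : ℕ) (p : ℕ → EuclideanSpace ℝ (Fin 2)) :
    Set (EuclideanSpace ℝ (Fin 2)) :=
  {p 0} ∪ ⋃ i ∈ Finset.range m, segment ℝ (p i) (p (i + 1))

/-- The square `[-1/2, 1/2]²`, the operational area of the cutter. -/
def unitSquare : Set (EuclideanSpace ℝ (Fin 2)) :=
  {x | ∀ j : Fin 2, x j ∈ Set.Icc (-(1 / 2) : ℝ) (1 / 2)}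

/-- The coverage of a tour: the Minkowski sum of its trace with the square
`[-1/2, 1/2]²`. -/
def squareCoverage (m : ℕ) (p : ℕ → EuclideanSpace ℝ (Fin 2)) :
    Set (EuclideanSpace ℝ (Fin 2)) :=
  tourTrace m p + unitSquare

namespace GridAux

abbrev E2 := EuclideanSpace ℝ (Fin 2)

noncomputable def vI (a b : ℝ) : E2 := (WithLp.equiv 2 (Fin 2 → ℝ)).symm ![a, b]
@[simp] lemma vI_0 (a b : ℝ) : vI a b 0 = a := rfl
@[simp] lemma vI_1 (a b : ℝ) : vI a b 1 = b := rfl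

noncomputable def nrmI (x : E2) : ℝ := max |x 0| |x 1|

lemma nrmI_nonneg (x : E2) : 0 ≤ nrmI x := le_trans (abs_nonneg _) (le_max_left _ _)
lemma abs0_le (x : E2) : |x 0| ≤ nrmI x := le_max_left _ _
lemma abs1_le (x : E2) : |x 1| ≤ nrmI x := le_max_right _ _
lemma nrmI_le {x : E2} {r : ℝ} (h0 : |x 0| ≤ r) (h1 : |x 1| ≤ r) : nrmI x ≤ r := max_le h0 h1

lemma nrmI_add_le (x y : E2) : nrmI (x + y) ≤ nrmI x + nrmI y := by
  apply nrmI_le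
  · exact le_trans (abs_add_le _ _) (add_le_add (abs0_le x) (abs0_le y))
  · exact le_trans (abs_add_le _ _) (add_le_add (abs1_le x) (abs1_le y))

lemma nrmI_neg (x : E2) : nrmI (-x) = nrmI x := by
  unfold nrmI
  rw [show ((-x) 0) = -(x 0) from rfl, show ((-x) 1) = -(x 1) from rfl, abs_neg, abs_neg]

lemma nrmI_sub_le (x y z : E2) : nrmI (x - z) ≤ nrmI (x - y) + nrmI (y - z) := by
  have : x - z = (x - y) + (y - z) := by abel
  rw [this]; exact nrmI_add_le _ _

lemma norm_eq2 (x : E2) : ‖x‖ = Real.sqrt (x 0 ^2 + x 1 ^2) := by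
  rw [EuclideanSpace.norm_eq]; simp [Fin.sum_univ_two, Real.norm_eq_abs, sq_abs]

lemma abs_coord_le (x : E2) (j : Fin 2) : |x j| ≤ ‖x‖ := by
  rw [norm_eq2]
  have h : x j ^2 ≤ x 0 ^2 + x 1 ^2 := by
    fin_cases j <;> simp <;> nlinarith [sq_nonneg (x 0), sq_nonneg (x 1)]
  calc |x j| = Real.sqrt (x j ^2) := by rw [Real.sqrt_sq_eq_abs]
  _ ≤ _ := Real.sqrt_le_sqrt h

lemma nrmI_le_norm (x : E2) : nrmI x ≤ ‖x‖ := nrmI_le (abs_coord_le x 0) (abs_coord_le x 1)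

lemma norm_le_sum_abs (x : E2) : ‖x‖ ≤ |x 0| + |x 1| := by
  rw [norm_eq2, show x 0 ^2 + x 1 ^2 = |x 0|^2 + |x 1|^2 by simp [sq_abs]]
  calc Real.sqrt (|x 0|^2 + |x 1|^2) ≤ Real.sqrt ((|x 0| + |x 1|)^2) := by
        apply Real.sqrt_le_sqrt; nlinarith [abs_nonneg (x 0), abs_nonneg (x 1)]
  _ = |x 0| + |x 1| := Real.sqrt_sq (by positivity)

lemma norm_le_two_nrmI (x : E2) : ‖x‖ ≤ 2 * nrmI x := by
  have := norm_le_sum_abs x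
  have h0 := abs0_le x; have h1 := abs1_le x; linarith

lemma nrmI_smul_le {t : ℝ} (x : E2) (h0 : 0 ≤ t) (h1 : t ≤ 1) : nrmI (t • x) ≤ nrmI x := by
  apply nrmI_le
  · rw [show (t • x) 0 = t * x 0 from rfl, abs_mul, abs_of_nonneg h0]
    nlinarith [abs0_le x, abs_nonneg (x 0), nrmI_nonneg x]
  · rw [show (t • x) 1 = t * x 1 from rfl, abs_mul, abs_of_nonneg h0]
    nlinarith [abs1_le x, abs_nonneg (x 1), nrmI_nonneg x]

/-- lattice relative to p0 -/
def Lat (p0 x : E2) : Prop := ∀ j : Fin 2, ∃ n : ℤ, x j = p0 j + n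

lemma lat_self (p0 : E2) : Lat p0 p0 := fun j => ⟨0, by simp⟩

lemma lat_add_vI {p0 c : E2} (h : Lat p0 c) (a b : ℤ) : Lat p0 (c + vI a b) := by
  rw [Lat, Fin.forall_fin_two]
  constructor
  · obtain ⟨n, hn⟩ := h 0
    exact ⟨n + a, by rw [show (c + vI a b) 0 = c 0 + (a:ℝ) from rfl, hn]; push_cast; ring⟩
  · obtain ⟨n, hn⟩ := h 1
    exact ⟨n + b, by rw [show (c + vI a b) 1 = c 1 + (b:ℝ) from rfl, hn]; push_cast; ring⟩

lemma lat_sub {p0 x y : E2} (hx : Lat p0 x) (hy : Lat p0 y) :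
    ∃ a b : ℤ, x 0 - y 0 = (a:ℝ) ∧ x 1 - y 1 = (b:ℝ) := by
  obtain ⟨n0, h0⟩ := hx 0; obtain ⟨n1, h1⟩ := hx 1
  obtain ⟨k0, g0⟩ := hy 0; obtain ⟨k1, g1⟩ := hy 1
  exact ⟨n0 - k0, n1 - k1, by rw [h0, g0]; push_cast; ring, by rw [h1, g1]; push_cast; ring⟩

noncomputable def rnd (p0 x : E2) : E2 :=
  vI (p0 0 + (round (x 0 - p0 0) : ℤ)) (p0 1 + (round (x 1 - p0 1) : ℤ))

lemma rnd_lat (p0 x : E2) : Lat p0 (rnd p0 x) := by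
  rw [Lat, Fin.forall_fin_two]
  exact ⟨⟨round (x 0 - p0 0), rfl⟩, ⟨round (x 1 - p0 1), rfl⟩⟩

lemma rnd_close (p0 x : E2) : nrmI (x - rnd p0 x) ≤ 1/2 := by
  apply nrmI_le
  · rw [show (x - rnd p0 x) 0 = x 0 - (p0 0 + (round (x 0 - p0 0) : ℤ)) from rfl]
    have := abs_sub_round (x 0 - p0 0)
    rw [show x 0 - (p0 0 + (round (x 0 - p0 0) : ℤ)) = (x 0 - p0 0) - round (x 0 - p0 0) by ring]
    exact this
  · rw [show (x - rnd p0 x) 1 = x 1 - (p0 1 + (round (x 1 - p0 1) : ℤ)) from rfl]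
    have := abs_sub_round (x 1 - p0 1)
    rw [show x 1 - (p0 1 + (round (x 1 - p0 1) : ℤ)) = (x 1 - p0 1) - round (x 1 - p0 1) by ring]
    exact this


def offs : List (ℤ × ℤ) :=
  [(-2,-2),(-2,-1),(-2,0),(-2,1),(-2,2),
   (-1,-2),(-1,-1),(-1,0),(-1,1),(-1,2),
   (0,-2),(0,-1),(0,0),(0,1),(0,2),
   (1,-2),(1,-1),(1,0),(1,1),(1,2),
   (2,-2),(2,-1),(2,0),(2,1),(2,2)]

lemma offs_abs : ∀ z ∈ offs, |z.1| ≤ 2 ∧ |z.2| ≤ 2 := by decide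

noncomputable def block (c : E2) : List E2 :=
  (c :: (offs.map fun z => c + vI z.1 z.2)) ++ [c]

lemma block_eq_cons (c : E2) : block c = c :: ((offs.map fun z => c + vI z.1 z.2) ++ [c]) := rfl

lemma block_length (c : E2) : (block c).length = 27 := by simp [block, offs]

lemma block_mem_dist {c x : E2} (h : x ∈ block c) : ‖x - c‖ ≤ 4 := by
  rw [block] at h
  simp only [List.mem_append, List.mem_cons, List.mem_map, List.mem_singleton] at h
  rcases h with (h | ⟨z, hz, rfl⟩) | (h | h)
  · subst h; simp
  case inr.inr => exact absurd h List.not_mem_nil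
  · rw [add_sub_cancel_left]
    obtain ⟨h1, h2⟩ := offs_abs z hz
    have e1 : |(vI z.1 z.2) 0| ≤ 2 := by
      rw [vI_0]; have hh : ((|z.1| : ℤ) : ℝ) ≤ ((2:ℤ):ℝ) := Int.cast_le.mpr h1; push_cast at hh; exact hh
    have e2 : |(vI z.1 z.2) 1| ≤ 2 := by
      rw [vI_1]; have hh : ((|z.2| : ℤ) : ℝ) ≤ ((2:ℤ):ℝ) := Int.cast_le.mpr h2; push_cast at hh; exact hh
    have := norm_le_sum_abs (vI z.1 z.2)
    linarith
  · subst h; simp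

lemma block_lat {p0 c : E2} (hc : Lat p0 c) : ∀ x ∈ block c, Lat p0 x := by
  intro x hx
  rw [block] at hx
  simp only [List.mem_append, List.mem_cons, List.mem_map, List.mem_singleton] at hx
  rcases hx with (h | ⟨z, hz, rfl⟩) | (h | h)
  · subst h; exact hc
  · exact lat_add_vI hc z.1 z.2
  · subst h; exact hc
  · exact absurd h List.not_mem_nil

lemma mem_block_of {p0 n c : E2} (hn : Lat p0 n) (hc : Lat p0 c)
    (h : nrmI (n - c) ≤ 11/4) : n ∈ block c := by
  obtain ⟨a, b, ha, hb⟩ := lat_sub hn hc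
  have ha2 : |a| ≤ 2 := by
    have : |(a:ℝ)| ≤ 11/4 := by
      rw [← ha, show n 0 - c 0 = (n - c) 0 from rfl]; exact le_trans (abs0_le _) h
    have : |(a:ℝ)| < 3 := lt_of_le_of_lt this (by norm_num)
    have : |a| < 3 := by exact_mod_cast (by push_cast at this ⊢; exact this : |(a:ℝ)| < (3:ℝ))
    omega
  have hb2 : |b| ≤ 2 := by
    have : |(b:ℝ)| ≤ 11/4 := by
      rw [← hb, show n 1 - c 1 = (n - c) 1 from rfl]; exact le_trans (abs1_le _) h
    have : |(b:ℝ)| < 3 := lt_of_le_of_lt this (by norm_num)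
    have : |b| < 3 := by exact_mod_cast (by push_cast at this ⊢; exact this : |(b:ℝ)| < (3:ℝ))
    omega
  have hmem : (a, b) ∈ offs := by
    rw [abs_le] at ha2 hb2
    obtain ⟨ha1, ha2⟩ := ha2; obtain ⟨hb1, hb2⟩ := hb2
    interval_cases a <;> interval_cases b <;> decide
  have : n = c + vI a b := by
    ext j
    fin_cases j
    · show n 0 = c 0 + (a:ℝ); linarith [ha]
    · show n 1 = c 1 + (b:ℝ); linarith [hb]
  rw [this, block]
  simp only [List.mem_append, List.mem_cons, List.mem_map]
  exact Or.inl (Or.inr ⟨(a,b), hmem, rfl⟩)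

/-- path length of a list of points -/
noncomputable def plen : List E2 → ℝ
  | [] => 0
  | [_] => 0
  | a :: b :: t => ‖b - a‖ + plen (b :: t)

lemma plen_nil : plen [] = 0 := rfl
lemma plen_single (a : E2) : plen [a] = 0 := rfl
lemma plen_cc (a b : E2) (t : List E2) : plen (a :: b :: t) = ‖b - a‖ + plen (b :: t) := rfl

lemma plen_nonneg : ∀ l : List E2, 0 ≤ plen l := by
  intro l
  induction l with
  | nil => simp [plen_nil]
  | cons a t ih =>
    cases t with
    | nil => simp [plen_single]
    | cons b t2 => rw [plen_cc]; positivity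

lemma plen_append_cons : ∀ (l₁ : List E2) (a : E2) (l₂ : List E2),
    plen (l₁ ++ a :: l₂) = plen (l₁ ++ [a]) + plen (a :: l₂) := by
  intro l₁
  induction l₁ with
  | nil => intro a l₂; simp [plen_single]
  | cons c l₁ ih =>
    intro a l₂
    cases l₁ with
    | nil => simp [plen_cc, plen_single]
    | cons d l₁ =>
      rw [show (c :: d :: l₁) ++ a :: l₂ = c :: d :: (l₁ ++ a :: l₂) from rfl,
          show (c :: d :: l₁) ++ [a] = c :: d :: (l₁ ++ [a]) from rfl,
          plen_cc, plen_cc,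
          show d :: (l₁ ++ a :: l₂) = (d :: l₁) ++ a :: l₂ from rfl,
          show d :: (l₁ ++ [a]) = (d :: l₁) ++ [a] from rfl,
          ih a l₂]
      ring

lemma plen_le_of_bounded (c : E2) (r : ℝ) (hr : 0 ≤ r) :
    ∀ l : List E2, (∀ x ∈ l, ‖x - c‖ ≤ r) → plen l ≤ 2 * r * l.length := by
  intro l
  induction l with
  | nil => intro _; simp [plen_nil]
  | cons a t ih =>
    intro h
    cases t with
    | nil => simp [plen_single]; positivity
    | cons b t2 =>
      rw [plen_cc]
      have h1 : ‖b - a‖ ≤ 2 * r := by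
        have := h a (by simp)
        have := h b (by simp)
        calc ‖b - a‖ = ‖(b - c) - (a - c)‖ := by congr 1; abel
        _ ≤ ‖b - c‖ + ‖a - c‖ := norm_sub_le _ _
        _ ≤ 2 * r := by linarith
      have h2 := ih (fun x hx => h x (List.mem_cons_of_mem _ hx))
      have hlen : ((a :: b :: t2).length : ℝ) = (b :: t2).length + 1 := by simp
      rw [hlen]; nlinarith [plen_nonneg (b :: t2)]

lemma plen_block (c : E2) : plen (block c) ≤ 216 := by
  have := plen_le_of_bounded c 4 (by norm_num) (block c) (fun x hx => block_mem_dist hx)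
  rw [block_length] at this
  norm_num at this
  linarith

lemma tourLength_list (d : E2) : ∀ l : List E2,
    tourLength (l.length - 1) (fun i => l.getD i d) = plen l := by
  intro l
  induction l with
  | nil => simp [tourLength, plen_nil]
  | cons a t ih =>
    cases t with
    | nil => simp [tourLength, plen_single]
    | cons b t2 =>
      have hlen : (a :: b :: t2).length - 1 = t2.length + 1 := by simp
      rw [hlen, tourLength, Finset.sum_range_succ']
      have h1 : ∀ i : ℕ, (a :: b :: t2).getD (i+1) d = (b :: t2).getD i d := fun i => rfl
      have h2 : (∑ i ∈ Finset.range t2.length,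
          ‖(a :: b :: t2).getD (i+1+1) d - (a :: b :: t2).getD (i+1) d‖)
          = plen (b :: t2) := by
        rw [← ih, tourLength]
        simp only [List.length_cons, Nat.add_sub_cancel]
        exact Finset.sum_congr rfl (fun i _ => rfl)
      rw [h2]
      rw [plen_cc]
      have : (a :: b :: t2).getD 1 d = b := rfl
      have h0 : (a :: b :: t2).getD 0 d = a := rfl
      rw [show (0:ℕ)+1 = 1 from rfl, this, h0]
      ring

lemma mem_trace_list (d : E2) {l : List E2} {x : E2} (hx : x ∈ l) :
    x ∈ tourTrace (l.length - 1) (fun i => l.getD i d) := by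
  obtain ⟨i, hi, hget⟩ := List.mem_iff_getElem.mp hx
  have hD : ∀ k (hk : k < l.length), l.getD k d = l[k] := fun k hk => List.getD_eq_getElem l d hk
  by_cases h1 : i + 1 < l.length
  · have him : i < l.length - 1 := by omega
    apply Set.mem_union_right
    rw [Set.mem_iUnion]
    refine ⟨i, ?_⟩
    rw [Set.mem_iUnion]
    refine ⟨Finset.mem_range.mpr him, ?_⟩
    have : (fun k => l.getD k d) i = x := by show l.getD i d = x; rw [hD i hi, hget]
    rw [← this]
    exact left_mem_segment _ _ _
  · have hieq : i = l.length - 1 := by omega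
    by_cases h2 : l.length = 1
    · apply Set.mem_union_left
      have : (fun k => l.getD k d) 0 = x := by
        show l.getD 0 d = x
        rw [hD 0 (by omega)]
        have : i = 0 := by omega
        subst this; exact hget
      rw [Set.mem_singleton_iff, ← this]
    · have hlen2 : 2 ≤ l.length := by
        rcases l with _ | ⟨a, t⟩
        · simp at hi
        · rcases t with _ | ⟨b, t2⟩
          · simp at h2
          · simp only [List.length_cons]; omega
      apply Set.mem_union_right
      rw [Set.mem_iUnion]
      refine ⟨i - 1, ?_⟩
      rw [Set.mem_iUnion]
      refine ⟨Finset.mem_range.mpr (by omega), ?_⟩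
      have hieq2 : i - 1 + 1 = i := by omega
      rw [hieq2]
      have : (fun k => l.getD k d) i = x := by show l.getD i d = x; rw [hD i hi, hget]
      rw [← this]
      exact right_mem_segment _ _ _

lemma nrmI_zero : nrmI 0 = 0 := by
  unfold nrmI
  rw [show ((0 : E2) 0) = (0:ℝ) from rfl, show ((0 : E2) 1) = (0:ℝ) from rfl]
  simp

lemma nrmI_sub_comm (x y : E2) : nrmI (x - y) = nrmI (y - x) := by
  rw [← nrmI_neg (x - y), neg_sub]

noncomputable def stApp (p0 : E2) (f : ℕ → E2) : ℕ → E2 × List E2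
  | 0 => (p0, block p0)
  | (i+1) =>
    let st := stApp p0 f i
    if nrmI (f (i+1) - st.1) ≤ 3/2 then st
    else (rnd p0 (f (i+1)), st.2 ++ block (rnd p0 (f (i+1))))

lemma stApp_inv (p0 : E2) (f : ℕ → E2) (hf0 : f 0 = p0) :
    ∀ i, (∀ t < i, ‖f (t+1) - f t‖ ≤ 1/4) →
      Lat p0 (stApp p0 f i).1 ∧
      nrmI (f i - (stApp p0 f i).1) ≤ 3/2 ∧
      (∃ t, (stApp p0 f i).2 = p0 :: t) ∧
      (∃ t, (stApp p0 f i).2 = t ++ [(stApp p0 f i).1]) ∧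
      (∀ x ∈ (stApp p0 f i).2, Lat p0 x) ∧
      (∀ k ≤ i, ∀ x ∈ block ((stApp p0 f k).1), x ∈ (stApp p0 f i).2) ∧
      plen (stApp p0 f i).2 ≤ 250 + 250 * (∑ t ∈ Finset.range i, ‖f (t+1) - f t‖)
          - 250 * nrmI (f i - (stApp p0 f i).1) := by
  intro i
  induction i with
  | zero =>
    intro _
    have hst : stApp p0 f 0 = (p0, block p0) := rfl
    rw [hst]
    have hP0 : nrmI (f 0 - p0) = 0 := by rw [hf0, sub_self, nrmI_zero]
    refine ⟨lat_self p0, by rw [hP0]; norm_num, ⟨_, rfl⟩, ⟨_, rfl⟩,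
      block_lat (lat_self p0), ?_, ?_⟩
    · intro k hk x hx
      interval_cases k
      exact hx
    · simp only [Finset.range_zero, Finset.sum_empty, hP0]
      have := plen_block p0
      linarith
  | succ i ih =>
    intro hstep
    obtain ⟨ha, hb, ⟨t1, hc⟩, ⟨t2, hd⟩, he, hg, hh⟩ :=
      ih (fun t ht => hstep t (by omega))
    have hsi : ‖f (i+1) - f i‖ ≤ 1/4 := hstep i (by omega)
    have hsum : (∑ t ∈ Finset.range (i+1), ‖f (t+1) - f t‖)
        = (∑ t ∈ Finset.range i, ‖f (t+1) - f t‖) + ‖f (i+1) - f i‖ :=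
      Finset.sum_range_succ _ _
    by_cases h : nrmI (f (i+1) - (stApp p0 f i).1) ≤ 3/2
    · have hst : stApp p0 f (i+1) = stApp p0 f i := by
        rw [stApp]
        simp only [if_pos h]
      rw [hst]
      refine ⟨ha, h, ⟨t1, hc⟩, ⟨t2, hd⟩, he, ?_, ?_⟩
      · intro k hk x hx
        rcases Nat.lt_succ_iff_lt_or_eq.mp (Nat.lt_succ_of_le hk) with hk' | hk'
        · exact hg k (by omega) x hx
        · subst hk'; rw [hst] at hx; exact hg i le_rfl x hx
      · have hP : nrmI (f (i+1) - (stApp p0 f i).1)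
            ≤ nrmI (f i - (stApp p0 f i).1) + ‖f (i+1) - f i‖ := by
          have h1 := nrmI_sub_le (f (i+1)) (f i) ((stApp p0 f i).1)
          have h2 := nrmI_le_norm (f (i+1) - f i)
          linarith
        rw [hsum]
        linarith
    · set c' := rnd p0 (f (i+1)) with hc'
      have hst : stApp p0 f (i+1) = (c', (stApp p0 f i).2 ++ block c') := by
        rw [stApp]
        simp only [if_neg h]
        rfl
      rw [hst]
      have hP1 : nrmI (f (i+1) - c') ≤ 1/2 := rnd_close p0 (f (i+1))
      have hPi : 3/2 - ‖f (i+1) - f i‖ ≤ nrmI (f i - (stApp p0 f i).1) := by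
        push_neg at h
        have h1 := nrmI_sub_le (f (i+1)) (f i) ((stApp p0 f i).1)
        have h2 := nrmI_le_norm (f (i+1) - f i)
        linarith
      have hjump : ‖c' - (stApp p0 f i).1‖ ≤ 9/2 := by
        have h0 := norm_le_two_nrmI (c' - (stApp p0 f i).1)
        have h1 := nrmI_sub_le c' (f (i+1)) ((stApp p0 f i).1)
        have h2 := nrmI_sub_le (f (i+1)) (f i) ((stApp p0 f i).1)
        have h3 : nrmI (c' - f (i+1)) ≤ 1/2 := by rw [nrmI_sub_comm]; exact hP1
        have h4 := nrmI_le_norm (f (i+1) - f i)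
        linarith
      have hplen : plen ((stApp p0 f i).2 ++ block c')
          = plen (stApp p0 f i).2 + ‖c' - (stApp p0 f i).1‖ + plen (block c') := by
        rw [block_eq_cons, plen_append_cons]
        conv_lhs => rw [hd]
        rw [List.append_assoc]
        simp only [List.singleton_append]
        rw [plen_append_cons, ← hd]
        rw [← block_eq_cons, plen_cc, plen_single]
        ring
      refine ⟨rnd_lat p0 (f (i+1)), le_trans hP1 (by norm_num), ?_,
        ⟨(stApp p0 f i).2 ++ (c' :: (offs.map fun z => c' + vI z.1 z.2)), ?_⟩, ?_, ?_, ?_⟩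
      · exact ⟨t1 ++ block c', by rw [hc]; rfl⟩
      · show (stApp p0 f i).2 ++ block c'
            = ((stApp p0 f i).2 ++ (c' :: (offs.map fun z => c' + vI z.1 z.2))) ++ [c']
        rw [List.append_assoc]; rfl
      · intro x hx
        rcases List.mem_append.mp hx with hx | hx
        · exact he x hx
        · exact block_lat (rnd_lat p0 (f (i+1))) x hx
      · intro k hk x hx
        rcases Nat.lt_succ_iff_lt_or_eq.mp (Nat.lt_succ_of_le hk) with hk' | hk'
        · exact List.mem_append_left _ (hg k (by omega) x hx)
        · subst hk'
          rw [hst] at hx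
          exact List.mem_append_right _ hx
      · rw [hplen, hsum]
        have hbl := plen_block c'
        linarith

/-! ### Subdivision of a tour into short edges -/

noncomputable def subd (p : ℕ → E2) (T : ℕ) (j : ℕ) : E2 :=
  p (j / T) + (((j % T : ℕ) : ℝ) / T) • (p (j / T + 1) - p (j / T))

lemma subd_eq (p : ℕ → E2) {T : ℕ} (hT : 0 < T) (i k : ℕ) (hk : k ≤ T) :
    subd p T (T * i + k) = p i + ((k : ℝ) / T) • (p (i + 1) - p i) := by
  rcases eq_or_lt_of_le hk with hkT | hkT
  · rw [hkT]
    have h1 : T * i + T = T * (i + 1) := by ring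
    rw [h1, subd, Nat.mul_div_cancel_left _ hT, Nat.mul_mod_right]
    have hT0 : (T : ℝ) ≠ 0 := Nat.cast_ne_zero.mpr hT.ne'
    rw [show ((T : ℝ) / T) = 1 by field_simp]
    simp
  · rw [subd, Nat.mul_add_div hT, Nat.div_eq_of_lt hkT, Nat.add_zero,
        Nat.mul_add_mod, Nat.mod_eq_of_lt hkT]

lemma subd_edge (p : ℕ → E2) {T : ℕ} (hT : 0 < T) (i k : ℕ) (hk : k < T) :
    subd p T (T * i + k + 1) - subd p T (T * i + k)
      = ((T : ℝ))⁻¹ • (p (i + 1) - p i) := by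
  have e1 := subd_eq p hT i k (le_of_lt hk)
  have e2 := subd_eq p hT i (k + 1) hk
  rw [show T * i + k + 1 = T * i + (k + 1) from rfl, e2, e1]
  have hT0 : (T : ℝ) ≠ 0 := Nat.cast_ne_zero.mpr hT.ne'
  rw [add_sub_add_left_eq_sub, ← sub_smul]
  congr 1
  push_cast
  field_simp
  ring

lemma subd_edge' (p : ℕ → E2) {T : ℕ} (hT : 0 < T) (j : ℕ) :
    subd p T (j + 1) - subd p T j = ((T : ℝ))⁻¹ • (p (j / T + 1) - p (j / T)) := by
  have h := subd_edge p hT (j / T) (j % T) (Nat.mod_lt _ hT)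
  rwa [Nat.div_add_mod j T] at h

lemma subd_len (p : ℕ → E2) {T : ℕ} (hT : 0 < T) : ∀ M : ℕ,
    (∑ j ∈ Finset.range (M * T), ‖subd p T (j + 1) - subd p T j‖)
      = ∑ i ∈ Finset.range M, ‖p (i + 1) - p i‖ := by
  intro M
  induction M with
  | zero => simp
  | succ M ih =>
    have hT0 : (T : ℝ) ≠ 0 := Nat.cast_ne_zero.mpr hT.ne'
    rw [show (M + 1) * T = M * T + T by ring, Finset.sum_range_add, ih,
        Finset.sum_range_succ]
    congr 1
    have hterm : ∀ k ∈ Finset.range T,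
        ‖subd p T (M * T + k + 1) - subd p T (M * T + k)‖
          = ‖p (M + 1) - p M‖ / T := by
      intro k hk
      rw [show M * T + k = T * M + k by ring,
          subd_edge p hT M k (Finset.mem_range.mp hk), norm_smul]
      simp [abs_of_nonneg (by positivity : (0:ℝ) ≤ ((T:ℝ))⁻¹)]
      ring
    rw [Finset.sum_congr rfl hterm, Finset.sum_const, Finset.card_range,
        nsmul_eq_mul]
    field_simp

lemma subd_mem_seg (p : ℕ → E2) {T : ℕ} (hT : 0 < T) (i : ℕ) {x : E2}
    (hx : x ∈ segment ℝ (p i) (p (i + 1))) :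
    ∃ k < T, x ∈ segment ℝ (subd p T (T * i + k)) (subd p T (T * i + k + 1)) := by
  rw [segment_eq_image'] at hx
  obtain ⟨t, ⟨ht0, ht1⟩, hxe⟩ := hx
  have hT0 : (T : ℝ) ≠ 0 := Nat.cast_ne_zero.mpr hT.ne'
  have hTpos : (0:ℝ) < T := by exact_mod_cast hT
  have htT : 0 ≤ t * T := by positivity
  set k : ℕ := min ⌊t * T⌋₊ (T - 1) with hkdef
  have hkT : k < T := by
    have : k ≤ T - 1 := min_le_right _ _
    omega
  have hk1 : (k : ℝ) ≤ t * T := by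
    rcases le_total ⌊t * T⌋₊ (T - 1) with hc | hc
    · rw [hkdef, min_eq_left hc]; exact Nat.floor_le htT
    · rw [hkdef, min_eq_right hc]
      calc ((T - 1 : ℕ) : ℝ) ≤ (⌊t * T⌋₊ : ℝ) := by exact_mod_cast hc
      _ ≤ t * T := Nat.floor_le htT
  have hk2 : t * T ≤ (k : ℝ) + 1 := by
    rcases le_total ⌊t * T⌋₊ (T - 1) with hc | hc
    · rw [hkdef, min_eq_left hc]
      exact le_of_lt (Nat.lt_floor_add_one _)
    · rw [hkdef, min_eq_right hc]
      have hTk : ((T - 1 : ℕ) : ℝ) + 1 = (T : ℝ) := by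
        have : (T - 1) + 1 = T := by omega
        exact_mod_cast congrArg (Nat.cast : ℕ → ℝ) this
      rw [hTk]
      calc t * T ≤ 1 * T := mul_le_mul_of_nonneg_right ht1 (le_of_lt hTpos)
      _ = T := one_mul _
  refine ⟨k, hkT, ?_⟩
  rw [segment_eq_image']
  refine ⟨t * T - k, ⟨by linarith, by linarith⟩, ?_⟩
  have hxe' : p i + t • (p (i + 1) - p i) = x := hxe
  show subd p T (T * i + k) + (t * (T:ℝ) - (k:ℝ)) •
      (subd p T (T * i + k + 1) - subd p T (T * i + k)) = x
  rw [show T * i + k + 1 = T * i + (k + 1) from rfl,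
      subd_eq p hT i k (le_of_lt hkT), subd_eq p hT i (k+1) hkT, ← hxe']
  set d := p (i + 1) - p i
  have step : (p i + (((k:ℕ)+1 : ℝ) / T) • d) - (p i + ((k : ℝ) / T) • d)
      = ((((k:ℝ)+1) / T) - ((k:ℝ) / T)) • d := by
    rw [sub_smul, add_sub_add_left_eq_sub]
  have hcast : (((k+1 : ℕ)) : ℝ) = (k : ℝ) + 1 := by push_cast; ring
  rw [hcast, step, smul_smul, add_assoc, ← add_smul]
  congr 1
  field_simp
  congr 1
  rw [div_eq_iff hT0]; ring

end GridAux

open GridAux in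
theorem grid_discretization_square :
    ∃ K : ℝ, 0 < K ∧
      ∀ (m : ℕ) (p : ℕ → EuclideanSpace ℝ (Fin 2)), p m = p 0 →
        1 ≤ tourLength m p →
        ∃ (m' : ℕ) (q : ℕ → EuclideanSpace ℝ (Fin 2)),
          q m' = q 0 ∧
          q 0 = p 0 ∧
          (∀ i ≤ m', ∀ j : Fin 2, ∃ n : ℤ, q i j = p 0 j + n) ∧
          squareCoverage m p ⊆ squareCoverage m' q ∧
          tourLength m' q ≤ K * tourLength m p := by
  refine ⟨1000, by norm_num, ?_⟩
  intro m p hclose hlen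
  set L := tourLength m p with hLdef
  have hL1 : 1 ≤ L := hlen
  set T : ℕ := ⌈(4:ℝ) * L⌉₊ with hTdef
  have hTr : (4:ℝ) * L ≤ T := Nat.le_ceil _
  have hT : 0 < T := by
    have h4 : (0:ℝ) < T := by linarith
    exact_mod_cast h4
  have hTpos : (0:ℝ) < T := by exact_mod_cast hT
  set f := subd p T with hfdef
  have hf0 : f 0 = p 0 := by
    have h := subd_eq p hT 0 0 (Nat.zero_le T)
    simpa using h
  have hdle : ∀ i < m, ‖p (i+1) - p i‖ ≤ L := by
    intro i hi
    rw [hLdef, tourLength]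
    exact Finset.single_le_sum (f := fun i => ‖p (i+1) - p i‖)
      (fun j _ => norm_nonneg _) (Finset.mem_range.mpr hi)
  have hstepj : ∀ t < m * T, ‖f (t+1) - f t‖ ≤ 1/4 := by
    intro t ht
    rw [hfdef, subd_edge' p hT t, norm_smul]
    have hdiv : t / T < m := by rw [Nat.div_lt_iff_lt_mul hT]; omega
    have h1 : ‖p (t/T + 1) - p (t/T)‖ ≤ L := hdle _ hdiv
    have h2 : ‖((T:ℝ))⁻¹‖ = ((T:ℝ))⁻¹ := by
      rw [Real.norm_eq_abs, abs_of_nonneg (by positivity)]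
    rw [h2]
    have h3 : ((T:ℝ))⁻¹ * ‖p (t/T + 1) - p (t/T)‖ ≤ ((T:ℝ))⁻¹ * L :=
      mul_le_mul_of_nonneg_left h1 (by positivity)
    have h4 : ((T:ℝ))⁻¹ * L ≤ 1/4 := by
      rw [inv_mul_le_iff₀ hTpos]
      linarith
    linarith
  have hfm : f (m*T) = p 0 := by
    have h := subd_eq p hT m 0 (Nat.zero_le T)
    rw [show T * m + 0 = m * T by ring] at h
    rw [hfdef, h]
    simp [hclose]
  have hjlt : ∀ i k : ℕ, i < m → k < T → T * i + k < m * T := by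
    intro i k him hkT
    calc T * i + k < T * (i+1) := by rw [Nat.mul_succ]; omega
    _ ≤ T * m := Nat.mul_le_mul_left T (by omega)
    _ = m * T := Nat.mul_comm T m
  obtain ⟨haM, hbM, ⟨t1, hcM⟩, ⟨t2, hdM⟩, heM, hgM, hhM⟩ :=
    stApp_inv (p 0) f hf0 (m*T) hstepj
  set lst := (stApp (p 0) f (m*T)).2 with hlstdef
  set cM := (stApp (p 0) f (m*T)).1 with hcMdef
  set l : List E2 := lst ++ [p 0] with hl
  have hlenl : l.length = lst.length + 1 := by rw [hl]; simp
  have hlen1 : l.length - 1 = lst.length := by omega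
  have hq0 : l.getD 0 (p 0) = p 0 := by
    rw [hl, hcM]
    rfl
  have hqm : l.getD lst.length (p 0) = p 0 := by
    rw [hl, List.getD_append_right lst [p 0] (p 0) lst.length le_rfl]
    simp
  have hmem_lat : ∀ x ∈ l, Lat (p 0) x := by
    intro x hx
    rw [hl] at hx
    rcases List.mem_append.mp hx with hx | hx
    · exact heM x hx
    · rw [List.mem_singleton] at hx
      subst hx
      exact lat_self _
  refine ⟨lst.length, fun i => l.getD i (p 0), ?_, ?_, ?_, ?_, ?_⟩
  · show l.getD lst.length (p 0) = l.getD 0 (p 0)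
    rw [hq0, hqm]
  · exact hq0
  · intro i hi j
    have hil : i < l.length := by omega
    have : l.getD i (p 0) ∈ l := by
      rw [List.getD_eq_getElem l (p 0) hil]
      exact List.getElem_mem hil
    exact hmem_lat _ this j
  · -- coverage
    intro y hy
    rw [squareCoverage] at hy
    obtain ⟨x, hx, u, hu, hxy⟩ := Set.mem_add.mp hy
    set n := rnd (p 0) (x + u) with hndef
    have hnclose : nrmI ((x + u) - n) ≤ 1/2 := rnd_close _ _
    have hu2 : nrmI u ≤ 1/2 := by
      apply nrmI_le
      · have := hu 0; rw [Set.mem_Icc] at this; rw [abs_le]; constructor <;> linarith [this.1, this.2]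
      · have := hu 1; rw [Set.mem_Icc] at this; rw [abs_le]; constructor <;> linarith [this.1, this.2]
    have hnx : nrmI (n - x) ≤ 1 := by
      have h1 := nrmI_sub_le n (x + u) x
      have h2 : nrmI (n - (x + u)) ≤ 1/2 := by rw [nrmI_sub_comm]; exact hnclose
      have h3 : nrmI ((x + u) - x) ≤ 1/2 := by
        rw [show (x + u) - x = u by abel]; exact hu2
      linarith
    have hfind : ∃ js, js ≤ m * T ∧ nrmI (x - (stApp (p 0) f js).1) ≤ 7/4 := by
      rcases hx with hx | hx
      · rw [Set.mem_singleton_iff] at hx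
        refine ⟨0, Nat.zero_le _, ?_⟩
        have hc0 : (stApp (p 0) f 0).1 = p 0 := rfl
        rw [hc0, hx, sub_self, nrmI_zero]
        norm_num
      · simp only [Set.mem_iUnion] at hx
        obtain ⟨i, hi, hseg⟩ := hx
        rw [Finset.mem_range] at hi
        obtain ⟨k, hkT, hseg2⟩ := subd_mem_seg p hT i hseg
        have hjslt : T * i + k < m * T := hjlt i k hi hkT
        refine ⟨T * i + k, le_of_lt hjslt, ?_⟩
        · set js := T * i + k with hjs
          obtain ⟨haj, hbj, -, -, -, -, -⟩ :=
            stApp_inv (p 0) f hf0 js (fun t ht => hstepj t (by omega))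
          rw [segment_eq_image'] at hseg2
          obtain ⟨s, ⟨hs0, hs1⟩, hxe⟩ := hseg2
          have hxe' : subd p T js + s • (subd p T (js + 1) - subd p T js) = x := hxe
          have hfj : f js = subd p T js := rfl
          have hfj1 : f (js + 1) = subd p T (js + 1) := rfl
          have hdecomp : x - (stApp (p 0) f js).1
              = (f js - (stApp (p 0) f js).1) + s • (f (js+1) - f js) := by
            rw [hfj, hfj1, ← hxe']
            abel
          rw [hdecomp]
          have h1 := nrmI_add_le (f js - (stApp (p 0) f js).1) (s • (f (js+1) - f js))
          have h2 := nrmI_smul_le (f (js+1) - f js) hs0 hs1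
          have h3 := nrmI_le_norm (f (js+1) - f js)
          have h4 : ‖f (js+1) - f js‖ ≤ 1/4 := hstepj js (by omega)
          linarith
    obtain ⟨js, hjle, hxc⟩ := hfind
    obtain ⟨haj, -, -, -, -, -, -⟩ :=
      stApp_inv (p 0) f hf0 js (fun t ht => hstepj t (by omega))
    have hnc : nrmI (n - (stApp (p 0) f js).1) ≤ 11/4 := by
      have := nrmI_sub_le n x ((stApp (p 0) f js).1)
      linarith
    have hnb : n ∈ block ((stApp (p 0) f js).1) :=
      mem_block_of (rnd_lat _ _) haj hnc
    have hnlst : n ∈ lst := hgM js hjle n hnb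
    have hnl : n ∈ l := by rw [hl]; exact List.mem_append_left _ hnlst
    have hntr := mem_trace_list (p 0) hnl
    rw [hlen1] at hntr
    rw [squareCoverage]
    apply Set.mem_add.mpr
    refine ⟨n, hntr, (x + u) - n, ?_, by rw [← hxy]; abel⟩
    intro j
    rw [Set.mem_Icc]
    have habs : |((x + u) - n) j| ≤ 1/2 := by
      fin_cases j
      · exact le_trans (abs0_le _) hnclose
      · exact le_trans (abs1_le _) hnclose
    rw [abs_le] at habs
    constructor <;> linarith [habs.1, habs.2]
  · -- length
    have hTL := tourLength_list (p 0) l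
    rw [hlen1] at hTL
    rw [hTL]
    have hplen : plen l = plen lst + ‖p 0 - cM‖ := by
      rw [hl]
      conv_lhs => rw [hdM]
      rw [List.append_assoc]
      simp only [List.singleton_append]
      rw [plen_append_cons, ← hdM, plen_cc, plen_single]
      ring
    have hS : (∑ t ∈ Finset.range (m*T), ‖f (t+1) - f t‖) = L := by
      rw [hfdef]
      exact subd_len p hT m
    have hjump : ‖p 0 - cM‖ ≤ 3 := by
      have h1 := norm_le_two_nrmI (p 0 - cM)
      have h2 : nrmI (p 0 - cM) ≤ 3/2 := by rw [← hfm]; exact hbM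
      linarith
    have hnn := nrmI_nonneg (f (m*T) - cM)
    rw [hplen]
    rw [hS] at hhM
    linarith
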